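/- arXiv:1205.2854 — 3 statements merged into one kernel-verified Lean document; each statement's English description precedes it below -/
import Mathlib

section
/- For all positive integers α, β and every nonnegative integer l, the higher-order q-Genocchi polynomials satisfy the convolution identity G_{l,q}^{(α+β)}(x) = Σ_{n=0}^{l} binom(l,n)_q · G_{n,q}^{(α)} · G_{l-n,q}^{(β)}(x), where G_{n,q}^{(α)} = G_{n,q}^{(α)}(0). -/
open PowerSeries Finset

/-- The `q`-number `[n]_q = (1 - q^n)/(1 - q)`. -/
noncomputable def qNum (q : ℂ) (n : ℕ) : ℂ := (1 - q ^ n) / (1 - q)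

/-- The `q`-factorial `[n]_q! = [n]_q [n-1]_q ⋯ [1]_q`, with `[0]_q! = 1`. -/
noncomputable def qFact (q : ℂ) : ℕ → ℂ
  | 0 => 1
  | n + 1 => qNum q (n + 1) * qFact q n

/-- The Gaussian `q`-binomial coefficient `[n]_q! / ([k]_q! [n-k]_q!)`. -/
noncomputable def qBinom (q : ℂ) (n k : ℕ) : ℂ :=
  qFact q n / (qFact q k * qFact q (n - k))

/-- `e_q(zx)` as a formal power series in `z`: `∑ x^l z^l / [l]_q!`. -/
noncomputable def qExpGF (q x : ℂ) : PowerSeries ℂ :=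
  PowerSeries.mk fun l => x ^ l / qFact q l

/-- The generating function `([2]_q z / (e_q(z)+1))^α e_q(zx)` of the
higher-order `q`-Genocchi polynomials, as a formal power series in `z`. -/
noncomputable def qGenocchiGF (q : ℂ) (α : ℕ) (x : ℂ) : PowerSeries ℂ :=
  (PowerSeries.C (qNum q 2) * PowerSeries.X * (qExpGF q 1 + 1)⁻¹) ^ α * qExpGF q x

lemma qFact_ne_zero (q : ℂ) (hq0 : 0 < ‖q‖) (hq1 : ‖q‖ < 1) (n : ℕ) :
    qFact q n ≠ 0 := by
  induction n with
  | zero => simp [qFact]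
  | succ n ih =>
    have hqn : ‖q ^ (n + 1)‖ < 1 := by
      rw [norm_pow]
      exact pow_lt_one₀ (norm_nonneg q) hq1 (Nat.succ_ne_zero n)
    have h1 : (1 : ℂ) - q ^ (n + 1) ≠ 0 := by
      intro h
      have : q ^ (n + 1) = 1 := by linear_combination -h
      rw [this] at hqn; simp at hqn
    have h2 : (1 : ℂ) - q ≠ 0 := by
      intro h
      have : q = 1 := by linear_combination -h
      rw [this] at hq1; simp at hq1
    have : qNum q (n + 1) ≠ 0 := div_ne_zero h1 h2
    simpa [qFact] using mul_ne_zero this ih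

lemma qExpGF_zero (q : ℂ) : qExpGF q 0 = 1 := by
  ext n
  cases n with
  | zero => simp [qExpGF, qFact]
  | succ n => simp [qExpGF]

/-- For positive integers `α, β` and every nonnegative integer `l`,
`G_{l,q}^{(α+β)}(x) = ∑_{n=0}^{l} binom(l,n)_q G_{n,q}^{(α)} G_{l-n,q}^{(β)}(x)`,
where `G_{n,q}^{(γ)} = G_{n,q}^{(γ)}(0)`. Here `G γ n x` denotes the `q`-Genocchi
polynomial of order `γ`, the whole family being defined by the generating identity. -/
theorem qGenocchi_add_order (q : ℂ) (hq0 : 0 < ‖q‖) (hq1 : ‖q‖ < 1)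
    (α β : ℕ) (hα : 0 < α) (hβ : 0 < β)
    (G : ℕ → ℕ → ℂ → ℂ)
    (hG : ∀ γ : ℕ, 0 < γ → ∀ x : ℂ,
      PowerSeries.mk (fun n => G γ n x / qFact q n) = qGenocchiGF q γ x) :
    ∀ (l : ℕ) (x : ℂ),
      G (α + β) l x =
        ∑ n ∈ Finset.range (l + 1), qBinom q l n * G α n 0 * G β (l - n) x := by
  intro l x
  have hf := qFact_ne_zero q hq0 hq1
  have key : qGenocchiGF q (α + β) x = qGenocchiGF q α 0 * qGenocchiGF q β x := by
    unfold qGenocchiGF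
    rw [qExpGF_zero, mul_one, pow_add]
    ring
  have heq : PowerSeries.mk (fun n => G (α + β) n x / qFact q n) =
      PowerSeries.mk (fun n => G α n 0 / qFact q n) *
      PowerSeries.mk (fun n => G β n x / qFact q n) := by
    rw [hG (α + β) (by omega) x, hG α hα 0, hG β hβ x, key]
  have hc := congrArg (PowerSeries.coeff l) heq
  rw [PowerSeries.coeff_mk, PowerSeries.coeff_mul] at hc
  rw [Finset.Nat.sum_antidiagonal_eq_sum_range_succ_mk] at hc
  simp only [PowerSeries.coeff_mk] at hc
  have : G (α + β) l x = qFact q l *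
      ∑ n ∈ Finset.range (l + 1), G α n 0 / qFact q n * (G β (l - n) x / qFact q (l - n)) := by
    rw [← hc, mul_comm, div_mul_cancel₀ _ (hf l)]
  rw [this, Finset.mul_sum]
  refine Finset.sum_congr rfl fun n hn => ?_
  rw [qBinom]
  field_simp
end

section
/- Let 0 < q < 1 be real. For every nonnegative integer j, the q-Gamma function has a simple pole at z = -j with q-residue lim_{z→-j} [z+j]_q · Γ_q(z) = (-1)^j q^{j(j+1)/2} / [j]_q!. -/
open Filter Topology

/-- The `q`-number `[w]_q = (1 - q^w)/(1 - q)` of a complex number `w`,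
via the principal branch `q^w = exp(w log q)`. -/
noncomputable def qNumC (q w : ℂ) : ℂ := (1 - q ^ w) / (1 - q)

/-- The (entire) `q`-exponential `E_q(w) = ∑ q^{l(l-1)/2} w^l/[l]_q!`. -/
noncomputable def qExpE (q w : ℂ) : ℂ :=
  ∑' l : ℕ, q ^ (l * (l - 1) / 2) * w ^ l / qFact q l

/-- The infinite `q`-Pochhammer symbol `(a;q)_∞ = ∏_{k≥0} (1 - a q^k)`. -/
noncomputable def qPochInf (a q : ℂ) : ℂ := ∏' k : ℕ, (1 - a * q ^ k)

/-- Jackson's `q`-Gamma function `Γ_q(z) = (q;q)_∞/(q^z;q)_∞ · (1-q)^{1-z}`. -/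
noncomputable def qGammaC (q : ℝ) (z : ℂ) : ℂ :=
  qPochInf (q : ℂ) (q : ℂ) / qPochInf ((q : ℂ) ^ z) (q : ℂ) * (1 - (q : ℂ)) ^ (1 - z)

namespace QRes

open Complex Finset


lemma nat_rel (j : ℕ) : j * (j - 1) + 2 * j = j * (j + 1) ∧
    j * (j - 1) + j * (j + 1) = 2 * (j * j) ∧ 2 ∣ j * (j - 1) := by
  cases j with
  | zero => simp
  | succ n =>
    refine ⟨by simp [Nat.succ_sub_one]; ring, by simp [Nat.succ_sub_one]; ring, ?_⟩
    rw [Nat.succ_sub_one, Nat.mul_comm]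
    exact (Nat.even_mul_succ_self n).two_dvd

lemma nat_exp1 (j : ℕ) : j + j * (j - 1) / 2 = j * (j + 1) / 2 := by
  obtain ⟨h1, h2, h3⟩ := nat_rel j
  generalize j * (j - 1) = a at *
  generalize j * (j + 1) = b at *
  generalize j * j = c at *
  omega

lemma nat_exp2 (j : ℕ) : j * (j - 1) / 2 + j * (j + 1) / 2 = j * j := by
  obtain ⟨h1, h2, h3⟩ := nat_rel j
  generalize j * (j - 1) = a at *
  generalize j * (j + 1) = b at *
  generalize j * j = c at *
  omega

lemma aux_prod (Q : ℂ) (j : ℕ) :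
    ∏ k ∈ Finset.range j, (Q ^ j - Q ^ k)
      = (-1) ^ j * Q ^ (j * (j - 1) / 2) * ∏ m ∈ Finset.range j, (1 - Q ^ (m + 1)) := by
  induction j with
  | zero => simp
  | succ j ih =>
    rw [Finset.prod_range_succ' (fun k => Q ^ (j+1) - Q ^ k)]
    have h1 : ∀ i, Q ^ (j+1) - Q ^ (i+1) = Q * (Q ^ j - Q ^ i) := by
      intro i; ring
    simp only [h1]
    rw [Finset.prod_mul_distrib, Finset.prod_const, ih]
    rw [Finset.prod_range_succ (fun m => 1 - Q ^ (m + 1))]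
    have hexp : (j + 1) * (j + 1 - 1) / 2 = j + j * (j - 1) / 2 := by
      rw [Nat.succ_sub_one, Nat.mul_comm (j+1) j]
      exact (nat_exp1 j).symm
    rw [hexp, pow_add, Finset.card_range]
    ring

lemma qFact_eq (Q : ℂ) (hQ : Q ≠ 1) (j : ℕ) :
    qFact Q j = (∏ m ∈ Finset.range j, (1 - Q ^ (m + 1))) / (1 - Q) ^ j := by
  induction j with
  | zero => simp [qFact]
  | succ j ih =>
    rw [qFact, ih, Finset.prod_range_succ, qNum]
    have h1 : (1 : ℂ) - Q ≠ 0 := sub_ne_zero.2 (by simpa using hQ.symm)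
    field_simp
    ring


variable {q : ℝ}



lemma norm_log_one_sub_le {r : ℝ} (hr : r < 1) {z : ℂ} (hz : ‖z‖ ≤ r) :
    ‖Complex.log (1 - z)‖ ≤ ((1 - r)⁻¹ / 2 + 1) * ‖z‖ := by
  have h0 : (0:ℝ) ≤ ‖z‖ := norm_nonneg z
  have h1 : ‖-z‖ < 1 := by rw [norm_neg]; exact lt_of_le_of_lt hz hr
  have h2 := Complex.norm_log_one_add_le h1
  rw [norm_neg] at h2
  rw [sub_eq_add_neg]
  refine le_trans h2 ?_
  have e2 : (1 - ‖z‖)⁻¹ ≤ (1 - r)⁻¹ := by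
    apply inv_anti₀ (by linarith) (by linarith)
  have e1 : ‖z‖ ^ 2 ≤ ‖z‖ := by nlinarith
  have e3 : (0:ℝ) < (1 - r)⁻¹ := inv_pos.2 (by linarith)
  nlinarith [pow_nonneg h0 2]

lemma summable_log (hq0 : 0 < q) (hq1 : q < 1) (w : ℂ) :
    Summable fun k : ℕ => Complex.log (1 - w * (q:ℂ) ^ k) := by
  have hq : ‖(q:ℂ)‖ = q := by simp [Complex.norm_real, abs_of_pos hq0]
  apply Summable.of_norm_bounded_eventually_nat (g := fun k => 3/2 * ‖w‖ * q ^ k)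
  · simpa [mul_assoc] using (summable_geometric_of_lt_one hq0.le hq1).mul_left (3/2 * ‖w‖)
  · have htend : Tendsto (fun k : ℕ => ‖w‖ * q ^ k) atTop (𝓝 0) := by
      simpa using (tendsto_pow_atTop_nhds_zero_of_lt_one hq0.le hq1).const_mul ‖w‖
    filter_upwards [htend.eventually (eventually_le_nhds (by norm_num : (0:ℝ) < 1/2))] with k hk
    have hnorm : ‖w * (q:ℂ) ^ k‖ = ‖w‖ * q ^ k := by
      rw [norm_mul, norm_pow, hq]
    have h12 : ‖-(w * (q:ℂ) ^ k)‖ ≤ 1/2 := by rw [norm_neg, hnorm]; exact hk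
    have := Complex.norm_log_one_add_half_le_self h12
    rw [← sub_eq_add_neg, norm_neg, hnorm] at this
    calc ‖Complex.log (1 - w * (q:ℂ) ^ k)‖ ≤ 3/2 * (‖w‖ * q ^ k) := this
      _ = 3/2 * ‖w‖ * q ^ k := by ring

lemma tprod_eq_exp (hq0 : 0 < q) (hq1 : q < 1) {w : ℂ}
    (hw : ∀ k : ℕ, 1 - w * (q:ℂ) ^ k ≠ 0) :
    ∏' k : ℕ, (1 - w * (q:ℂ) ^ k)
      = Complex.exp (∑' k : ℕ, Complex.log (1 - w * (q:ℂ) ^ k)) := by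
  have hs := (summable_log hq0 hq1 w).hasSum.cexp
  rw [show (Complex.exp ∘ fun k : ℕ => Complex.log (1 - w * (q:ℂ) ^ k))
      = fun k : ℕ => 1 - w * (q:ℂ) ^ k from funext fun k => Complex.exp_log (hw k)] at hs
  exact hs.tprod_eq

lemma multipliable_aux (hq0 : 0 < q) (hq1 : q < 1) {w : ℂ}
    (hw : ∀ k : ℕ, 1 - w * (q:ℂ) ^ k ≠ 0) :
    Multipliable fun k : ℕ => 1 - w * (q:ℂ) ^ k := by
  have hs := (summable_log hq0 hq1 w).hasSum.cexp
  rw [show (Complex.exp ∘ fun k : ℕ => Complex.log (1 - w * (q:ℂ) ^ k))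
      = fun k : ℕ => 1 - w * (q:ℂ) ^ k from funext fun k => Complex.exp_log (hw k)] at hs
  exact ⟨_, hs⟩

lemma ne_zero_of_norm_lt {w : ℂ} (hw : ‖w‖ < 1) (k : ℕ) (hq0 : 0 < q) (hq1 : q < 1) :
    1 - w * (q:ℂ) ^ k ≠ 0 := by
  have hq : ‖(q:ℂ)‖ = q := by simp [Complex.norm_real, abs_of_pos hq0]
  intro h
  have : ‖w * (q:ℂ) ^ k‖ < 1 := by
    rw [norm_mul, norm_pow, hq]
    calc ‖w‖ * q ^ k ≤ ‖w‖ * 1 := by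
          gcongr
          exact pow_le_one₀ hq0.le hq1.le
      _ < 1 := by simpa using hw
  rw [sub_eq_zero] at h
  rw [← h] at this
  simp at this

lemma continuousAt_F (hq0 : 0 < q) (hq1 : q < 1) :
    ContinuousAt (fun w : ℂ => ∏' k : ℕ, (1 - w * (q:ℂ) ^ k)) (q:ℂ) := by
  have hq : ‖(q:ℂ)‖ = q := by simp [Complex.norm_real, abs_of_pos hq0]
  set r : ℝ := (1 + q) / 2 with hr
  have hr1 : r < 1 := by rw [hr]; linarith
  have hr0 : 0 < r := by rw [hr]; linarith
  set s : Set ℂ := Metric.closedBall 0 r with hs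
  have hball : ∀ w ∈ s, ∀ k : ℕ, ‖w * (q:ℂ) ^ k‖ ≤ r * q ^ k := by
    intro w hwmem k
    rw [norm_mul, norm_pow, hq]
    have : ‖w‖ ≤ r := by simpa [hs, Metric.mem_closedBall, dist_eq_norm] using hwmem
    gcongr
  have hball1 : ∀ w ∈ s, ∀ k : ℕ, ‖w * (q:ℂ) ^ k‖ < 1 := by
    intro w hwmem k
    refine lt_of_le_of_lt (hball w hwmem k) ?_
    calc r * q ^ k ≤ r * 1 := by gcongr; exact pow_le_one₀ hq0.le hq1.le
      _ < 1 := by simpa using hr1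
  have hG : ContinuousOn (fun w : ℂ => ∑' k : ℕ, Complex.log (1 - w * (q:ℂ) ^ k)) s := by
    apply continuousOn_tsum (u := fun k => ((1 - r)⁻¹ / 2 + 1) * r * q ^ k)
    · intro k
      apply ContinuousOn.clog (by fun_prop)
      intro x hx
      have hre : ((x * (q:ℂ) ^ k).re : ℝ) ≤ ‖x * (q:ℂ) ^ k‖ := Complex.re_le_norm _
      have := hball1 x hx k
      apply Complex.mem_slitPlane_iff.2
      left
      simp only [Complex.sub_re, Complex.one_re]
      linarith
    · simpa [mul_assoc] using
        (summable_geometric_of_lt_one hq0.le hq1).mul_left (((1 - r)⁻¹ / 2 + 1) * r)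
    · intro k x hx
      have h1 : ‖x * (q:ℂ) ^ k‖ ≤ r := by
        refine le_trans (hball x hx k) ?_
        calc r * q ^ k ≤ r * 1 := by gcongr; exact pow_le_one₀ hq0.le hq1.le
          _ = r := by ring
      calc ‖Complex.log (1 - x * (q:ℂ) ^ k)‖
          ≤ ((1 - r)⁻¹ / 2 + 1) * ‖x * (q:ℂ) ^ k‖ := norm_log_one_sub_le hr1 h1
        _ ≤ ((1 - r)⁻¹ / 2 + 1) * (r * q ^ k) := by
            have : (0:ℝ) ≤ (1 - r)⁻¹ / 2 + 1 := by
              have : (0:ℝ) < (1 - r)⁻¹ := inv_pos.2 (by linarith)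
              linarith
            exact mul_le_mul_of_nonneg_left (hball x hx k) this
        _ = ((1 - r)⁻¹ / 2 + 1) * r * q ^ k := by ring
  have hFG : Set.EqOn (fun w : ℂ => ∏' k : ℕ, (1 - w * (q:ℂ) ^ k))
      (fun w : ℂ => Complex.exp (∑' k : ℕ, Complex.log (1 - w * (q:ℂ) ^ k))) s := by
    intro w hwmem
    exact tprod_eq_exp hq0 hq1 fun k =>
      ne_zero_of_norm_lt (by
        have := hball1 w hwmem 0
        simpa using this) k hq0 hq1
  have hFcont : ContinuousOn (fun w : ℂ => ∏' k : ℕ, (1 - w * (q:ℂ) ^ k)) s :=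
    (Complex.continuous_exp.comp_continuousOn hG).congr hFG
  have hsnhds : s ∈ 𝓝 (q:ℂ) := by
    apply Metric.closedBall_mem_nhds_of_mem
    simp only [Metric.mem_ball, dist_zero_right, hq]
    rw [hr]; linarith
  exact hFcont.continuousAt hsnhds

lemma F_ne_zero (hq0 : 0 < q) (hq1 : q < 1) {w : ℂ}
    (hw : ∀ k : ℕ, 1 - w * (q:ℂ) ^ k ≠ 0) :
    ∏' k : ℕ, (1 - w * (q:ℂ) ^ k) ≠ 0 := by
  rw [tprod_eq_exp hq0 hq1 hw]
  exact Complex.exp_ne_zero _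




lemma factor_ne (hq0 : 0 < q) (hq1 : q < 1) (j : ℕ) {z : ℂ}
    (hz1 : z ≠ -(j:ℂ)) (hz2 : ‖z + j‖ < 1)
    (hz3 : ‖z + j‖ < 2 * Real.pi / (-Real.log q)) (k : ℕ) :
    1 - (q:ℂ) ^ z * (q:ℂ) ^ k ≠ 0 := by
  have hL : Real.log q < 0 := Real.log_neg hq0 hq1
  have hQ0 : (q:ℂ) ≠ 0 := by
    simpa using hq0.ne'
  intro h
  rw [sub_eq_zero] at h
  -- rewrite as exponentials
  have hlog : Complex.log (q:ℂ) = ((Real.log q : ℝ) : ℂ) := (Complex.ofReal_log hq0.le).symm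
  have hz : (q:ℂ) ^ z = Complex.exp (z * ((Real.log q : ℝ) : ℂ)) := by
    rw [Complex.cpow_def_of_ne_zero hQ0, hlog, mul_comm]
  have hk : (q:ℂ) ^ k = Complex.exp ((k : ℂ) * ((Real.log q : ℝ) : ℂ)) := by
    have : (q:ℂ) = Complex.exp ((Real.log q : ℝ) : ℂ) := by
      rw [← Complex.ofReal_exp, Real.exp_log hq0]
    rw [this, ← Complex.exp_nat_mul]
  rw [hz, hk, ← Complex.exp_add] at h
  have h' : z * ((Real.log q : ℝ) : ℂ) + (k : ℂ) * ((Real.log q : ℝ) : ℂ)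
      = (z + k) * ((Real.log q : ℝ) : ℂ) := by ring
  rw [h'] at h
  obtain ⟨n, hn⟩ := Complex.exp_eq_one_iff.mp h.symm
  have him : z.im * Real.log q = (n : ℝ) * (2 * Real.pi) := by
    have := congrArg Complex.im hn
    simpa [Complex.mul_im, Complex.add_im, Complex.add_re, Real.pi] using this
  have hre : (z.re + k) * Real.log q = 0 := by
    have := congrArg Complex.re hn
    simpa [Complex.mul_re, Complex.add_re] using this
  have hzre : z.re = -(k:ℝ) := by
    rcases mul_eq_zero.mp hre with h1 | h1
    · linarith
    · exact absurd h1 hL.ne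
  rcases eq_or_ne n 0 with hn0 | hn0
  · -- z = -k
    have hzim : z.im = 0 := by
      rw [hn0] at him
      simp only [Int.cast_zero, zero_mul] at him
      rcases mul_eq_zero.mp him with h1 | h1
      · exact h1
      · exact absurd h1 hL.ne
    have hzeq : z = -(k:ℂ) := by
      apply Complex.ext <;> simp [hzre, hzim]
    rcases eq_or_ne k j with hkj | hkj
    · exact hz1 (by rw [hzeq, hkj])
    · have : z + (j:ℂ) = (((j:ℝ) - (k:ℝ) : ℝ) : ℂ) := by
        rw [hzeq]; push_cast; ring
      rw [this, Complex.norm_real] at hz2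
      have : (1:ℝ) ≤ |(j:ℝ) - (k:ℝ)| := by
        rcases lt_or_gt_of_ne hkj with hlt | hgt
        · rw [abs_of_pos (sub_pos.2 (by exact_mod_cast hlt))]
          have : (k:ℝ) + 1 ≤ (j:ℝ) := by exact_mod_cast Nat.succ_le_of_lt hlt
          linarith
        · rw [abs_of_neg (sub_neg.2 (by exact_mod_cast hgt))]
          have : (j:ℝ) + 1 ≤ (k:ℝ) := by exact_mod_cast Nat.succ_le_of_lt hgt
          linarith
      linarith [this.trans_lt hz2]
  · -- |Im z| is too large
    have hpi : 0 < Real.pi := Real.pi_pos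
    have habs : |z.im| * (-Real.log q) = |(n:ℝ)| * (2 * Real.pi) := by
      have h0 := congrArg (fun t : ℝ => |t|) him
      simp only [abs_mul, abs_of_neg hL, abs_of_pos Real.pi_pos] at h0
      rw [show |(2:ℝ)| = 2 by norm_num] at h0
      linarith
    have hn1 : (1:ℝ) ≤ |(n:ℝ)| := by
      have : (1:ℤ) ≤ |n| := Int.one_le_abs hn0
      exact_mod_cast this
    have him_le : |z.im| ≤ ‖z + (j:ℂ)‖ := by
      have : z.im = (z + (j:ℂ)).im := by simp
      rw [this]
      exact Complex.abs_im_le_norm _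
    have hlow : 2 * Real.pi / (-Real.log q) ≤ |z.im| := by
      rw [div_le_iff₀ (by linarith)]
      calc 2 * Real.pi = 1 * (2 * Real.pi) := by ring
        _ ≤ |(n:ℝ)| * (2 * Real.pi) := by gcongr
        _ = |z.im| * (-Real.log q) := habs.symm
    linarith [him_le.trans_lt hz3]



end QRes

open QRes Complex Finset

/-- For every `j ∈ ℕ`, the `q`-Gamma function has a simple pole at `z = -j` with
`q`-residue `lim_{z→-j} [z+j]_q Γ_q(z) = (-1)^j q^{j(j+1)/2}/[j]_q!`. -/
theorem qGamma_qResidue (q : ℝ) (hq : q ∈ Set.Ioo (0 : ℝ) 1) (j : ℕ) :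
    Filter.Tendsto (fun z : ℂ => qNumC (q : ℂ) (z + (j : ℂ)) * qGammaC q z)
      (𝓝[≠] (-(j : ℂ)))
      (𝓝 ((-1 : ℂ) ^ j * (q : ℂ) ^ (j * (j + 1) / 2) / qFact (q : ℂ) j)) := by
  obtain ⟨hq0, hq1⟩ := hq
  have hL : Real.log q < 0 := Real.log_neg hq0 hq1
  have hQ0 : (q:ℂ) ≠ 0 := by exact_mod_cast hq0.ne'
  have hQne1 : (q:ℂ) ≠ 1 := by exact_mod_cast hq1.ne
  have hQ1 : (1:ℂ) - (q:ℂ) ≠ 0 := sub_ne_zero.2 (by exact_mod_cast hq1.ne')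
  have hQnorm : ‖(q:ℂ)‖ < 1 := by
    rw [Complex.norm_real, Real.norm_eq_abs, abs_of_pos hq0]; exact hq1
  have hQj : ((q:ℂ)^j) ≠ 0 := pow_ne_zero _ hQ0
  -- the comparison function
  set G : ℂ → ℂ := fun z =>
      (∏' k : ℕ, (1 - (q:ℂ) * (q:ℂ) ^ k)) * (1 - (q:ℂ)) ^ (-z) /
      ((∏ k ∈ Finset.range j, (1 - (q:ℂ) ^ z * (q:ℂ) ^ k)) *
        ∏' k : ℕ, (1 - ((q:ℂ) ^ z * (q:ℂ) ^ (j + 1)) * (q:ℂ) ^ k)) with hG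
  set δ : ℝ := min 1 (2 * Real.pi / (-Real.log q)) with hδ
  have hδ0 : 0 < δ :=
    lt_min one_pos (div_pos (by linarith [Real.pi_pos]) (by linarith))
  -- eventual equality
  have hev : ∀ᶠ z in 𝓝[≠] (-(j:ℂ)),
      qNumC (q:ℂ) (z + (j:ℂ)) * qGammaC q z = G z := by
    have hball : ∀ᶠ z in 𝓝 (-(j:ℂ)), ‖z + (j:ℂ)‖ < δ := by
      filter_upwards [Metric.ball_mem_nhds (-(j:ℂ)) hδ0] with z hz
      simpa [Metric.mem_ball, dist_eq_norm, sub_neg_eq_add] using hz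
    filter_upwards [self_mem_nhdsWithin,
      eventually_nhdsWithin_of_eventually_nhds hball] with z hz1 hz2
    have hz1' : z ≠ -(j:ℂ) := hz1
    have hfac : ∀ k : ℕ, 1 - (q:ℂ) ^ z * (q:ℂ) ^ k ≠ 0 :=
      factor_ne hq0 hq1 j hz1' (hz2.trans_le (min_le_left _ _))
        (hz2.trans_le (min_le_right _ _))
    have hfac' : ∀ k : ℕ, 1 - ((q:ℂ) ^ z * (q:ℂ) ^ (j + 1)) * (q:ℂ) ^ k ≠ 0 := fun k => by
      rw [mul_assoc, ← pow_add]; exact hfac (j + 1 + k)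
    have hmul : Multipliable fun k : ℕ => 1 - ((q:ℂ) ^ z * (q:ℂ) ^ (j + 1)) * (q:ℂ) ^ k :=
      multipliable_aux hq0 hq1 hfac'
    have hm2 : Multipliable fun n : ℕ => 1 - (q:ℂ) ^ z * (q:ℂ) ^ (n + (j + 1)) := by
      refine (multipliable_congr ?_).mp hmul
      intro n; rw [pow_add]; ring
    have hsplit : qPochInf ((q:ℂ) ^ z) (q:ℂ)
        = (∏ k ∈ Finset.range (j + 1), (1 - (q:ℂ) ^ z * (q:ℂ) ^ k)) *
          ∏' k : ℕ, (1 - ((q:ℂ) ^ z * (q:ℂ) ^ (j + 1)) * (q:ℂ) ^ k) := by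
      rw [qPochInf, ← Multipliable.prod_mul_tprod_nat_mul'
        (f := fun k : ℕ => 1 - (q:ℂ) ^ z * (q:ℂ) ^ k) (k := j + 1) hm2]
      congr 1
      exact tprod_congr fun k => by rw [pow_add]; ring
    have hpow1 : (q:ℂ) ^ (z + (j:ℂ)) = (q:ℂ) ^ z * (q:ℂ) ^ j := by
      rw [Complex.cpow_add _ _ hQ0, Complex.cpow_natCast]
    have hpow2 : (1 - (q:ℂ)) ^ ((1:ℂ) - z) = (1 - (q:ℂ)) * (1 - (q:ℂ)) ^ (-z) := by
      rw [show (1:ℂ) - z = 1 + -z from sub_eq_add_neg 1 z, Complex.cpow_add _ _ hQ1,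
        Complex.cpow_one]
    have hP : (∏ k ∈ Finset.range j, (1 - (q:ℂ) ^ z * (q:ℂ) ^ k)) ≠ 0 :=
      Finset.prod_ne_zero_iff.2 fun k _ => hfac k
    have hT : (∏' k : ℕ, (1 - ((q:ℂ) ^ z * (q:ℂ) ^ (j + 1)) * (q:ℂ) ^ k)) ≠ 0 :=
      F_ne_zero hq0 hq1 hfac'
    have hj' : 1 - (q:ℂ) ^ z * (q:ℂ) ^ j ≠ 0 := hfac j
    rw [hG, qNumC, qGammaC, hsplit, Finset.prod_range_succ, hpow1, hpow2, qPochInf]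
    field_simp
  -- continuity of G at -j
  have hgval : (q:ℂ) ^ (-(j:ℂ)) * (q:ℂ) ^ (j + 1) = (q:ℂ) := by
    rw [Complex.cpow_neg, Complex.cpow_natCast, pow_succ]
    field_simp
  have hc2 : ContinuousAt (fun z : ℂ => (q:ℂ) ^ z) (-(j:ℂ)) := continuousAt_const_cpow hQ0
  have hc1 : ContinuousAt (fun z : ℂ => (1 - (q:ℂ)) ^ (-z)) (-(j:ℂ)) :=
    (continuousAt_const_cpow hQ1).comp continuousAt_neg
  have hcP : ContinuousAt (fun z : ℂ => ∏ k ∈ Finset.range j,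
      (1 - (q:ℂ) ^ z * (q:ℂ) ^ k)) (-(j:ℂ)) := by
    have houter : Continuous (fun w : ℂ => ∏ k ∈ Finset.range j, (1 - w * (q:ℂ) ^ k)) :=
      continuous_finset_prod _ fun k _ => by fun_prop
    exact (houter.continuousAt).comp hc2
  have hcT : ContinuousAt (fun z : ℂ => ∏' k : ℕ,
      (1 - ((q:ℂ) ^ z * (q:ℂ) ^ (j + 1)) * (q:ℂ) ^ k)) (-(j:ℂ)) := by
    have hinner : ContinuousAt (fun z : ℂ => (q:ℂ) ^ z * (q:ℂ) ^ (j + 1)) (-(j:ℂ)) :=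
      hc2.mul continuousAt_const
    have houter : ContinuousAt (fun w : ℂ => ∏' k : ℕ, (1 - w * (q:ℂ) ^ k))
        ((q:ℂ) ^ (-(j:ℂ)) * (q:ℂ) ^ (j + 1)) := by
      rw [hgval]
      exact continuousAt_F hq0 hq1
    exact houter.tendsto.comp hinner
  -- nonvanishing of the denominator at -j
  have hqfac : ∀ k : ℕ, (1 : ℂ) - (q:ℂ) * (q:ℂ) ^ k ≠ 0 := fun k =>
    ne_zero_of_norm_lt hQnorm k hq0 hq1
  have hkj : ∀ k, k < j → (1 : ℂ) - (q:ℂ) ^ (-(j:ℂ)) * (q:ℂ) ^ k ≠ 0 := by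
    intro k hk h0
    rw [Complex.cpow_neg, Complex.cpow_natCast, sub_eq_zero] at h0
    have hqq : (q:ℂ) ^ k = (q:ℂ) ^ j := by
      field_simp at h0
      linear_combination -h0
    have : q ^ j < q ^ k := pow_lt_pow_right_of_lt_one₀ hq0 hq1 hk
    have : (q:ℝ) ^ k = (q:ℝ) ^ j := by exact_mod_cast hqq
    linarith
  have hPd : (∏ k ∈ Finset.range j, (1 - (q:ℂ) ^ (-(j:ℂ)) * (q:ℂ) ^ k)) ≠ 0 :=
    Finset.prod_ne_zero_iff.2 fun k hk => hkj k (Finset.mem_range.mp hk)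
  have hTval : (∏' k : ℕ, (1 - ((q:ℂ) ^ (-(j:ℂ)) * (q:ℂ) ^ (j + 1)) * (q:ℂ) ^ k))
      = ∏' k : ℕ, (1 - (q:ℂ) * (q:ℂ) ^ k) := by rw [hgval]
  have hFQ : (∏' k : ℕ, (1 - (q:ℂ) * (q:ℂ) ^ k)) ≠ 0 := F_ne_zero hq0 hq1 hqfac
  have hden : ((∏ k ∈ Finset.range j, (1 - (q:ℂ) ^ (-(j:ℂ)) * (q:ℂ) ^ k)) *
      ∏' k : ℕ, (1 - ((q:ℂ) ^ (-(j:ℂ)) * (q:ℂ) ^ (j + 1)) * (q:ℂ) ^ k)) ≠ 0 := by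
    rw [hTval]; exact mul_ne_zero hPd hFQ
  have hcont : ContinuousAt G (-(j:ℂ)) := by
    rw [hG]
    exact ((continuousAt_const.mul hc1).div (hcP.mul hcT) hden)
  -- value of G at -j
  have hval : G (-(j:ℂ)) = (-1 : ℂ) ^ j * (q : ℂ) ^ (j * (j + 1) / 2) / qFact (q : ℂ) j := by
    rw [hG]
    simp only [hTval, neg_neg]
    rw [Complex.cpow_natCast]
    have hprodval : (∏ k ∈ Finset.range j, (1 - (q:ℂ) ^ (-(j:ℂ)) * (q:ℂ) ^ k))
        = (-1) ^ j * (q:ℂ) ^ (j * (j - 1) / 2) *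
          (∏ m ∈ Finset.range j, (1 - (q:ℂ) ^ (m + 1))) / (q:ℂ) ^ (j * j) := by
      have h1 : ∀ k ∈ Finset.range j, (1 - (q:ℂ) ^ (-(j:ℂ)) * (q:ℂ) ^ k)
          = ((q:ℂ) ^ j - (q:ℂ) ^ k) / (q:ℂ) ^ j := by
        intro k _
        rw [Complex.cpow_neg, Complex.cpow_natCast]
        field_simp
      rw [Finset.prod_congr rfl h1, Finset.prod_div_distrib, Finset.prod_const,
        Finset.card_range, aux_prod, ← pow_mul]
    have hD : (∏ m ∈ Finset.range j, (1 - (q:ℂ) ^ (m + 1))) ≠ 0 := by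
      apply Finset.prod_ne_zero_iff.2
      intro m _
      have := hqfac m
      rwa [← pow_succ'] at this
    rw [hprodval, qFact_eq (q:ℂ) hQne1]
    have hqjj : (q:ℂ) ^ (j * j) ≠ 0 := pow_ne_zero _ hQ0
    have hpowQ : ((q:ℂ) ^ (j * (j - 1) / 2)) ≠ 0 := pow_ne_zero _ hQ0
    have h1Qj : ((1:ℂ) - (q:ℂ)) ^ j ≠ 0 := pow_ne_zero _ hQ1
    field_simp
    rw [← nat_exp2 j, pow_add]
    have hsign : ((-1:ℂ)) ^ j * (-1) ^ j = 1 := by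
      rw [← pow_add, ← two_mul, pow_mul]; norm_num
    linear_combination (-((q:ℂ) ^ (j * (j - 1) / 2) * (q:ℂ) ^ (j * (j + 1) / 2))) * hsign
  rw [← hval]
  exact Filter.Tendsto.congr' (hev.mono fun z hz => hz.symm)
    (hcont.tendsto.mono_left nhdsWithin_le_nhds)
end

section
/- Let f : ℝ → ℝ (or ℝ → ℂ) be differentiable at x and at -x, with x ≠ 0, and continuous in a neighborhood of ±x. Then Rubin's q-differential operator converges to the ordinary derivative: lim_{q→1⁻} ∂_q(f)(x) = f′(x). -/
open Filter Topology

/-- If `f` is differentiable at `x` and at `-x` (`x ≠ 0`) and continuous in a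
neighborhood of `x` and of `-x`, then Rubin's `q`-differential operator
`∂_q(f)(x) = [f(q⁻¹x) + f(-q⁻¹x) - f(qx) + f(-qx) - 2f(-x)]/(2(1-q)x)`
converges to the ordinary derivative `f′(x)` as `q → 1⁻`. -/
theorem rubin_qDeriv_tendsto_deriv (f : ℝ → ℝ) (x : ℝ) (hx : x ≠ 0)
    (hfx : DifferentiableAt ℝ f x) (hfnx : DifferentiableAt ℝ f (-x))
    (hcx : ∀ᶠ y in 𝓝 x, ContinuousAt f y)
    (hcnx : ∀ᶠ y in 𝓝 (-x), ContinuousAt f y) :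
    Filter.Tendsto
      (fun q : ℝ =>
        (f (q⁻¹ * x) + f (-(q⁻¹ * x)) - f (q * x) + f (-(q * x)) - 2 * f (-x)) /
          (2 * (1 - q) * x))
      (𝓝[<] (1 : ℝ)) (𝓝 (deriv f x)) := by
  have hs1 : Tendsto (slope f x) (𝓝[≠] x) (𝓝 (deriv f x)) :=
    hasDerivAt_iff_tendsto_slope.mp hfx.hasDerivAt
  have hs2 : Tendsto (slope f (-x)) (𝓝[≠] (-x)) (𝓝 (deriv f (-x))) :=
    hasDerivAt_iff_tendsto_slope.mp hfnx.hasDerivAt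
  have hqmem : ∀ᶠ q in 𝓝[<] (1:ℝ), q ∈ Set.Ioo (0:ℝ) 1 :=
    Ioo_mem_nhdsLT_of_mem (by constructor <;> norm_num)
  have hq1 : Tendsto (fun q : ℝ => q) (𝓝[<] (1:ℝ)) (𝓝 1) :=
    tendsto_id.mono_left nhdsWithin_le_nhds
  -- four composed tendsto's
  have t1 : Tendsto (fun q : ℝ => q⁻¹ * x) (𝓝[<] (1:ℝ)) (𝓝[≠] x) := by
    rw [tendsto_nhdsWithin_iff]
    constructor
    · have := (hq1.inv₀ one_ne_zero).mul_const x
      simpa using this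
    · filter_upwards [hqmem] with q hq
      have hq0 : q ≠ 0 := ne_of_gt hq.1
      have : q⁻¹ ≠ 1 := fun h => hq.2.ne (by rw [← inv_inv q, h, inv_one])
      simp only [Set.mem_compl_iff, Set.mem_singleton_iff]
      intro h
      exact this (mul_right_cancel₀ hx (by simpa using h))
  have t2 : Tendsto (fun q : ℝ => q * x) (𝓝[<] (1:ℝ)) (𝓝[≠] x) := by
    rw [tendsto_nhdsWithin_iff]
    constructor
    · simpa using hq1.mul_const x
    · filter_upwards [hqmem] with q hq
      simp only [Set.mem_compl_iff, Set.mem_singleton_iff]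
      intro h
      exact hq.2.ne (mul_right_cancel₀ hx (by simpa using h))
  have t3 : Tendsto (fun q : ℝ => -(q⁻¹ * x)) (𝓝[<] (1:ℝ)) (𝓝[≠] (-x)) := by
    rw [tendsto_nhdsWithin_iff]
    constructor
    · have := ((hq1.inv₀ one_ne_zero).mul_const x).neg
      simpa using this
    · filter_upwards [hqmem] with q hq
      have : q⁻¹ ≠ 1 := fun h => hq.2.ne (by rw [← inv_inv q, h, inv_one])
      simp only [Set.mem_compl_iff, Set.mem_singleton_iff, neg_inj]
      intro h
      exact this (mul_right_cancel₀ hx (by simpa using h))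
  have t4 : Tendsto (fun q : ℝ => -(q * x)) (𝓝[<] (1:ℝ)) (𝓝[≠] (-x)) := by
    rw [tendsto_nhdsWithin_iff]
    constructor
    · simpa using (hq1.mul_const x).neg
    · filter_upwards [hqmem] with q hq
      simp only [Set.mem_compl_iff, Set.mem_singleton_iff, neg_inj]
      intro h
      exact hq.2.ne (mul_right_cancel₀ hx (by simpa using h))
  have A := hs1.comp t1
  have B := hs1.comp t2
  have C := hs2.comp t3
  have D := hs2.comp t4
  have hinv : Tendsto (fun q : ℝ => (2*q)⁻¹) (𝓝[<] (1:ℝ)) (𝓝 (2⁻¹)) := by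
    have : Tendsto (fun q : ℝ => 2*q) (𝓝[<] (1:ℝ)) (𝓝 2) := by
      simpa using hq1.const_mul 2
    simpa using this.inv₀ (by norm_num)
  have G : Tendsto (fun q : ℝ =>
      slope f x (q⁻¹ * x) * (2*q)⁻¹ + slope f x (q * x) * 2⁻¹
      - slope f (-x) (-(q⁻¹ * x)) * (2*q)⁻¹ + slope f (-x) (-(q * x)) * 2⁻¹)
      (𝓝[<] (1:ℝ))
      (𝓝 (deriv f x * 2⁻¹ + deriv f x * 2⁻¹ - deriv f (-x) * 2⁻¹ + deriv f (-x) * 2⁻¹)) := by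
    exact (((A.mul hinv).add (B.mul tendsto_const_nhds)).sub (C.mul hinv)).add
      (D.mul tendsto_const_nhds)
  have heq : deriv f x * 2⁻¹ + deriv f x * 2⁻¹ - deriv f (-x) * 2⁻¹ + deriv f (-x) * 2⁻¹
      = deriv f x := by ring
  rw [heq] at G
  refine G.congr' ?_
  filter_upwards [hqmem] with q hq
  have hq0 : q ≠ 0 := ne_of_gt hq.1
  have hq1' : (1:ℝ) - q ≠ 0 := sub_ne_zero.mpr (ne_of_lt hq.2).symm
  simp only [slope_def_field]
  have e1 : q⁻¹ * x - x = (1 - q) * x / q := by field_simp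
  have e2 : q * x - x = -((1 - q) * x) := by ring
  have e3 : -(q⁻¹ * x) - -x = -((1 - q) * x / q) := by field_simp; ring
  have e4 : -(q * x) - -x = (1 - q) * x := by ring
  rw [e1, e2, e3, e4]
  field_simp
  ring
end
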